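/- In the general Galton–Watson random set framework, there exists c = c(d,M,L) > 0 such that almost surely upor(E,x) ≥ c for every x ∈ E. -/

import Mathlib

open MeasureTheory ProbabilityTheory Filter Metric Set
open scoped ENNReal ProbabilityTheory RealInnerProductSpace

noncomputable section

/-- The closed `M`-adic cube of level `n` in `[0,1]^d` indexed by `k : Fin d → ℕ`
(with `k i < M ^ n`). -/
def mCube (d M n : ℕ) (k : Fin d → ℕ) : Set (EuclideanSpace ℝ (Fin d)) :=
  {x | ∀ i, (k i : ℝ) / (M : ℝ) ^ n ≤ x i ∧ x i ≤ ((k i : ℝ) + 1) / (M : ℝ) ^ n}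

/-- Given, for every `M`-adic cube, a finite set of selected subcubes (indexed by their offsets
`f : Fin d → ℕ` with `f i < M`), the predicate saying that the level-`n` cube indexed by `k`
is one of the cubes constituting `E_n`. -/
def keptGW (M d : ℕ) (sel : ℕ × (Fin d → ℕ) → Finset (Fin d → ℕ)) : ℕ → (Fin d → ℕ) → Prop
  | 0, _ => True
  | n + 1, k => keptGW M d sel n (fun i => k i / M) ∧
      (fun i => k i % M) ∈ sel (n, fun i => k i / M)

/-- The union `E_n` of the cubes of level `n` constituting the random set, for a given
selection configuration. -/
def gwLevel (d M n : ℕ) (sel : ℕ × (Fin d → ℕ) → Finset (Fin d → ℕ)) :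
    Set (EuclideanSpace ℝ (Fin d)) :=
  ⋃ (k : Fin d → ℕ) (_ : (∀ i, k i < M ^ n) ∧ keptGW M d sel n k), mCube d M n k

/-- The limit set `E = ⋂ n, E_n` of the Galton–Watson random set, for a given selection
configuration. -/
def gwLimit (d M : ℕ) (sel : ℕ × (Fin d → ℕ) → Finset (Fin d → ℕ)) :
    Set (EuclideanSpace ℝ (Fin d)) :=
  ⋂ n, gwLevel d M n sel

/-- The porosity of `A` at `x` at scale `r`:
`por(A,x,r) = sup {ϱ ≥ 0 : ∃ y, B(y,ϱr) ⊆ B(x,r) \ A}` (closed balls). -/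
def por {d : ℕ} (A : Set (EuclideanSpace ℝ (Fin d))) (x : EuclideanSpace ℝ (Fin d)) (r : ℝ) :
    ℝ :=
  sSup {ϱ : ℝ | 0 ≤ ϱ ∧ ∃ y, closedBall y (ϱ * r) ⊆ closedBall x r \ A}

/-- The upper porosity of `A` at `x`: `limsup_{r → 0+} por(A,x,r)`. -/
def upor {d : ℕ} (A : Set (EuclideanSpace ℝ (Fin d))) (x : EuclideanSpace ℝ (Fin d)) : ℝ :=
  limsup (fun r => por A x r) (nhdsWithin 0 (Ioi 0))

/-- The lower porosity of `A` at `x`: `liminf_{r → 0+} por(A,x,r)`. -/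
def lpor {d : ℕ} (A : Set (EuclideanSpace ℝ (Fin d))) (x : EuclideanSpace ℝ (Fin d)) : ℝ :=
  liminf (fun r => por A x r) (nhdsWithin 0 (Ioi 0))

namespace Stmt15Aux

variable {d M : ℕ}

lemma nat_div_pow_lt {k n j : ℕ} (hM : 2 ≤ M) (hk : k < M ^ n) (hj : j ≤ n) :
    k / M ^ (n - j) < M ^ j := by
  have hpos : 0 < M ^ (n - j) := Nat.pow_pos (by omega)
  rw [Nat.div_lt_iff_lt_mul hpos]
  calc k < M ^ n := hk
    _ = M ^ j * M ^ (n - j) := by rw [← pow_add]; congr 1; omega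

lemma nat_succ_div_le {k m : ℕ} (hm : 0 < m) : k + 1 ≤ (k / m + 1) * m := by
  have h1 := Nat.div_add_mod k m
  have h2 := Nat.mod_lt k hm
  nlinarith [Nat.div_add_mod k m, Nat.mod_lt k hm]

lemma mCube_subset (hM : 2 ≤ M) {n j : ℕ} (hj : j ≤ n) (k : Fin d → ℕ) :
    mCube d M n k ⊆ mCube d M j (fun i => k i / M ^ (n - j)) := by
  intro x hx i
  obtain ⟨h1, h2⟩ := hx i
  have hM0 : (0:ℝ) < (M:ℝ) := by exact_mod_cast (by omega : 0 < M)
  have hMj : (0:ℝ) < (M:ℝ) ^ j := pow_pos hM0 j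
  have hMn : (0:ℝ) < (M:ℝ) ^ n := pow_pos hM0 n
  have hMnj : (0:ℝ) < (M:ℝ) ^ (n - j) := pow_pos hM0 (n - j)
  have hsplit : (M:ℝ) ^ n = (M:ℝ) ^ j * (M:ℝ) ^ (n - j) := by
    rw [← pow_add]; congr 1; omega
  have key1 : ((k i / M ^ (n - j) : ℕ) : ℝ) * (M:ℝ) ^ (n - j) ≤ (k i : ℝ) := by
    exact_mod_cast Nat.div_mul_le_self (k i) (M ^ (n - j))
  have key2 : (k i : ℝ) + 1 ≤ (((k i / M ^ (n - j) : ℕ) : ℝ) + 1) * (M:ℝ) ^ (n - j) := by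
    exact_mod_cast nat_succ_div_le (Nat.pow_pos (by omega) : 0 < M ^ (n-j))
  constructor
  · have : ((k i / M ^ (n - j) : ℕ) : ℝ) / (M:ℝ) ^ j ≤ (k i : ℝ) / (M:ℝ) ^ n := by
      rw [div_le_div_iff₀ hMj hMn, hsplit]
      nlinarith
    exact this.trans h1
  · have : ((k i : ℝ) + 1) / (M:ℝ) ^ n ≤ (((k i / M ^ (n - j) : ℕ) : ℝ) + 1) / (M:ℝ) ^ j := by
      rw [div_le_div_iff₀ hMn hMj, hsplit]
      nlinarith
    exact h2.trans this

lemma kept_div (sel : ℕ × (Fin d → ℕ) → Finset (Fin d → ℕ)) :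
    ∀ {n : ℕ} (k : Fin d → ℕ), keptGW M d sel n k → ∀ j ≤ n,
      keptGW M d sel j (fun i => k i / M ^ (n - j)) := by
  intro n
  induction n with
  | zero =>
    intro k hk j hj
    interval_cases j
    simpa using hk
  | succ n ih =>
    intro k hk j hj
    rcases Nat.eq_or_lt_of_le hj with h | h
    · subst h
      simpa using hk
    · have hj' : j ≤ n := by omega
      have := ih (fun i => k i / M) hk.1 j hj'
      have heq : (fun i => (k i / M) / M ^ (n - j)) = (fun i => k i / M ^ (n + 1 - j)) := by
        funext i
        rw [Nat.div_div_eq_div_mul]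
        congr 1
        rw [← pow_succ']
        congr 1
        omega
      rwa [heq] at this

lemma coord_dist_le (x y : EuclideanSpace ℝ (Fin d)) (i : Fin d) :
    dist (x i) (y i) ≤ dist x y := by
  rw [EuclideanSpace.dist_eq]
  have h1 : dist (x i) (y i) ^ 2 ≤ ∑ j, dist (x j) (y j) ^ 2 :=
    Finset.single_le_sum (f := fun j => dist (x j) (y j) ^ 2) (fun j _ => sq_nonneg _)
      (Finset.mem_univ i)
  calc dist (x i) (y i) = Real.sqrt (dist (x i) (y i) ^ 2) := (Real.sqrt_sq dist_nonneg).symm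
    _ ≤ _ := Real.sqrt_le_sqrt h1

lemma dist_le_of_mem_mCube (hd : 1 ≤ d) (hM : 2 ≤ M) {n : ℕ} {k : Fin d → ℕ}
    {x y : EuclideanSpace ℝ (Fin d)} (hx : x ∈ mCube d M n k) (hy : y ∈ mCube d M n k) :
    dist x y ≤ (d : ℝ) / (M:ℝ) ^ n := by
  have hM0 : (0:ℝ) < (M:ℝ) := by exact_mod_cast (by omega : 0 < M)
  have hMn : (0:ℝ) < (M:ℝ) ^ n := pow_pos hM0 n
  have hd1 : (1:ℝ) ≤ (d:ℝ) := by exact_mod_cast hd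
  have hco : ∀ i, dist (x i) (y i) ≤ 1 / (M:ℝ) ^ n := by
    intro i
    obtain ⟨hx1, hx2⟩ := hx i
    obtain ⟨hy1, hy2⟩ := hy i
    have hsplit : ((k i : ℝ) + 1) / (M:ℝ) ^ n = (k i : ℝ) / (M:ℝ) ^ n + 1 / (M:ℝ) ^ n := by
      ring
    rw [Real.dist_eq, abs_le]
    constructor <;> [linarith [hsplit ▸ hx2, hsplit ▸ hy2]; linarith [hsplit ▸ hx2, hsplit ▸ hy2]]
  rw [EuclideanSpace.dist_eq]
  have hsum : ∑ i, dist (x i) (y i) ^ 2 ≤ ((d:ℝ) / (M:ℝ) ^ n) ^ 2 := by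
    calc ∑ i, dist (x i) (y i) ^ 2 ≤ ∑ _i : Fin d, (1 / (M:ℝ) ^ n) ^ 2 :=
          Finset.sum_le_sum (fun i _ => pow_le_pow_left₀ dist_nonneg (hco i) 2)
      _ = (d:ℝ) * (1 / (M:ℝ) ^ n) ^ 2 := by
          rw [Finset.sum_const, Finset.card_univ, Fintype.card_fin, nsmul_eq_mul]
      _ ≤ ((d:ℝ) / (M:ℝ) ^ n) ^ 2 := by
          have h2 : (0:ℝ) < ((M:ℝ) ^ n) ^ 2 := by positivity
          rw [div_pow, div_pow, one_pow, mul_one_div, div_le_div_iff₀ h2 h2]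
          nlinarith [mul_le_mul_of_nonneg_right (show (d:ℝ) ≤ (d:ℝ)^2 by nlinarith) h2.le]
  calc Real.sqrt (∑ i, dist (x i) (y i) ^ 2) ≤ Real.sqrt (((d:ℝ) / (M:ℝ) ^ n) ^ 2) :=
        Real.sqrt_le_sqrt hsum
    _ = (d:ℝ) / (M:ℝ) ^ n := Real.sqrt_sq (by positivity)

/-- Center of the (missing) child cube. -/
def ycenter (d M ℓ : ℕ) (K f : Fin d → ℕ) : EuclideanSpace ℝ (Fin d) :=
  WithLp.toLp 2 (fun i => (((K i * M + f i : ℕ) : ℝ) + 1/2) / (M:ℝ) ^ (ℓ + 1))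

lemma ycenter_mem (hM : 2 ≤ M) (ℓ : ℕ) (K f : Fin d → ℕ) :
    ycenter d M ℓ K f ∈ mCube d M (ℓ + 1) (fun i => K i * M + f i) := by
  intro i
  have hM0 : (0:ℝ) < (M:ℝ) := by exact_mod_cast (by omega : 0 < M)
  have hMn : (0:ℝ) < (M:ℝ) ^ (ℓ + 1) := pow_pos hM0 _
  have happ : ycenter d M ℓ K f i = (((K i * M + f i : ℕ) : ℝ) + 1/2) / (M:ℝ) ^ (ℓ + 1) := rfl
  constructor
  · rw [happ, div_le_div_iff₀ hMn hMn]
    nlinarith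
  · rw [happ, div_le_div_iff₀ hMn hMn]
    nlinarith

lemma notin_gwLevel (hM : 2 ≤ M) (sel : ℕ × (Fin d → ℕ) → Finset (Fin d → ℕ)) {ℓ : ℕ}
    {K f : Fin d → ℕ} (hkept : keptGW M d sel ℓ K) (hf : ∀ i, f i < M)
    (hfn : f ∉ sel (ℓ, K)) {z : EuclideanSpace ℝ (Fin d)}
    (hz : dist z (ycenter d M ℓ K f) ≤ 1 / (4 * (M:ℝ) ^ (ℓ + 1))) :
    z ∉ gwLevel d M (ℓ + 1) sel := by
  intro hzmem
  have hM0 : 0 < M := by omega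
  simp only [gwLevel, mem_iUnion] at hzmem
  obtain ⟨k', ⟨hkb, hkk⟩, hzc⟩ := hzmem
  by_cases hcase : ∀ i, k' i = K i * M + f i
  · obtain ⟨h1, h2⟩ := hkk
    have e1 : (fun i => k' i / M) = K := by
      funext i
      rw [hcase i, mul_comm (K i) M, Nat.mul_add_div hM0, Nat.div_eq_of_lt (hf i), add_zero]
    have e2 : (fun i => k' i % M) = f := by
      funext i
      rw [hcase i, mul_comm (K i) M, Nat.mul_add_mod, Nat.mod_eq_of_lt (hf i)]
    rw [e1, e2] at h2
    exact hfn h2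
  · push_neg at hcase
    obtain ⟨i, hne⟩ := hcase
    have hMR : (0:ℝ) < (M:ℝ) := by exact_mod_cast hM0
    have hs : (0:ℝ) < (M:ℝ) ^ (ℓ + 1) := pow_pos hMR _
    obtain ⟨hz1, hz2⟩ := hzc i
    have hcd : dist (z i) (ycenter d M ℓ K f i) ≤ 1 / (4 * (M:ℝ) ^ (ℓ + 1)) :=
      (coord_dist_le z (ycenter d M ℓ K f) i).trans hz
    have happ : ycenter d M ℓ K f i = (((K i * M + f i : ℕ) : ℝ) + 1/2) / (M:ℝ) ^ (ℓ + 1) := rfl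
    rw [happ, Real.dist_eq, abs_le] at hcd
    set C : ℝ := ((K i * M + f i : ℕ) : ℝ) with hC
    set s : ℝ := (M:ℝ) ^ (ℓ + 1) with hsdef
    have hmul2 := mul_le_mul_of_nonneg_right hcd.2 hs.le
    have hmul1 := mul_le_mul_of_nonneg_right hcd.1 hs.le
    have hc1 : (C + 1/2)/s * s = C + 1/2 := div_mul_cancel₀ _ hs.ne'
    have hc2 : 1/(4*s) * s = 1/4 := by field_simp
    rw [sub_mul, hc1, hc2] at hmul2
    rw [sub_mul, hc1, neg_mul, hc2] at hmul1
    have e1 : (k' i : ℝ) ≤ z i * s := (div_le_iff₀ hs).mp hz1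
    have e2 : z i * s ≤ (k' i : ℝ) + 1 := (le_div_iff₀ hs).mp hz2
    rcases lt_or_gt_of_ne hne with hlt | hgt
    · have hcast : (k' i : ℝ) + 1 ≤ C := by
        rw [hC]; exact_mod_cast hlt
      linarith
    · have hcast : C + 1 ≤ (k' i : ℝ) := by
        rw [hC]; exact_mod_cast hgt
      linarith

lemma por_mem_le_two (hd : 1 ≤ d) {A : Set (EuclideanSpace ℝ (Fin d))}
    {x : EuclideanSpace ℝ (Fin d)} {r : ℝ} (hr : 0 < r) :
    ∀ ϱ ∈ {ϱ : ℝ | 0 ≤ ϱ ∧ ∃ y, closedBall y (ϱ * r) ⊆ closedBall x r \ A}, ϱ ≤ 2 := by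
  rintro ϱ ⟨h0, y, hsub⟩
  have hϱr : 0 ≤ ϱ * r := mul_nonneg h0 hr.le
  have hy : y ∈ closedBall x r := (hsub (mem_closedBall_self hϱr)).1
  set e : EuclideanSpace ℝ (Fin d) := EuclideanSpace.single (⟨0, hd⟩ : Fin d) (1:ℝ) with he_def
  have he : ‖e‖ = 1 := by rw [he_def, EuclideanSpace.norm_single]; norm_num
  set z := y + (ϱ * r) • e with hz_def
  have hzy : dist z y = ϱ * r := by
    rw [hz_def, dist_eq_norm, add_sub_cancel_left, norm_smul, he, mul_one,
      Real.norm_eq_abs, abs_of_nonneg hϱr]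
  have hz : z ∈ closedBall x r := (hsub (by rw [mem_closedBall, hzy])).1
  have h1 : dist z y ≤ dist z x + dist x y := dist_triangle z x y
  rw [hzy] at h1
  rw [mem_closedBall] at hz hy
  rw [dist_comm x y] at h1
  have : ϱ * r ≤ 2 * r := by linarith
  exact le_of_mul_le_mul_right (by linarith) hr

lemma porSet_bddAbove (hd : 1 ≤ d) {A : Set (EuclideanSpace ℝ (Fin d))}
    {x : EuclideanSpace ℝ (Fin d)} {r : ℝ} (hr : 0 < r) :
    BddAbove {ϱ : ℝ | 0 ≤ ϱ ∧ ∃ y, closedBall y (ϱ * r) ⊆ closedBall x r \ A} :=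
  ⟨2, fun ϱ hϱ => por_mem_le_two hd hr ϱ hϱ⟩

lemma por_le_two (hd : 1 ≤ d) {A : Set (EuclideanSpace ℝ (Fin d))}
    {x : EuclideanSpace ℝ (Fin d)} {r : ℝ} (hr : 0 < r) : por A x r ≤ 2 :=
  Real.sSup_le (por_mem_le_two hd hr) (by norm_num)

lemma le_upor_of_frequently (hd : 1 ≤ d) (hM : 2 ≤ M) {A : Set (EuclideanSpace ℝ (Fin d))}
    {x : EuclideanSpace ℝ (Fin d)} {c : ℝ}
    (h : ∀ a : ℕ, ∃ j, a ≤ j ∧ c ≤ por A x (2 * (d:ℝ) / (M:ℝ) ^ j)) : c ≤ upor A x := by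
  have hM1 : (1:ℝ) < (M:ℝ) := by exact_mod_cast (by omega : 1 < M)
  have hd0 : (0:ℝ) < (d:ℝ) := by exact_mod_cast (by omega : 0 < d)
  rw [upor]
  apply Filter.le_limsup_of_frequently_le
  · rw [Filter.frequently_iff]
    intro U hU
    rw [Metric.mem_nhdsWithin_iff] at hU
    obtain ⟨ε, hε, hsub⟩ := hU
    obtain ⟨j0, hj0⟩ := pow_unbounded_of_one_lt (2 * (d:ℝ) / ε) hM1
    obtain ⟨j, hja, hcj⟩ := h j0
    have hMj0 : (0:ℝ) < (M:ℝ) ^ j0 := pow_pos (by linarith) _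
    have hMj : (0:ℝ) < (M:ℝ) ^ j := pow_pos (by linarith) _
    have hrpos : 0 < 2 * (d:ℝ) / (M:ℝ) ^ j := by positivity
    refine ⟨2 * (d:ℝ) / (M:ℝ) ^ j, hsub ⟨?_, hrpos⟩, hcj⟩
    rw [mem_ball, Real.dist_eq, sub_zero, abs_of_pos hrpos]
    have hle : (M:ℝ) ^ j0 ≤ (M:ℝ) ^ j := pow_le_pow_right₀ hM1.le hja
    have h2 : 2 * (d:ℝ) / (M:ℝ) ^ j ≤ 2 * (d:ℝ) / (M:ℝ) ^ j0 := by gcongr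
    have h3 : 2 * (d:ℝ) / (M:ℝ) ^ j0 < ε := by
      rw [div_lt_iff₀ hMj0]
      rw [div_lt_iff₀ hε] at hj0
      linarith
    linarith
  · exact ⟨2, Filter.eventually_map.mpr
      (eventually_mem_nhdsWithin.mono (fun r hr => por_le_two hd hr))⟩

lemma le_por (hd : 1 ≤ d) (hM : 2 ≤ M) (sel : ℕ × (Fin d → ℕ) → Finset (Fin d → ℕ))
    {x : EuclideanSpace ℝ (Fin d)} (hxE : x ∈ gwLimit d M sel) {j t ℓ : ℕ}
    (hjℓ : j ≤ ℓ) (hℓt : ℓ ≤ j + t) {A K : Fin d → ℕ} (hxA : x ∈ mCube d M j A)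
    (hkept : keptGW M d sel ℓ K) (hanc : ∀ i, K i / M ^ (ℓ - j) = A i)
    {f : Fin d → ℕ} (hf : ∀ i, f i < M) (hfn : f ∉ sel (ℓ, K)) :
    1 / ((M:ℝ) ^ (t+1) * (8 * (d:ℝ))) ≤ por (gwLimit d M sel) x (2 * (d:ℝ) / (M:ℝ) ^ j) := by
  have hM0 : (0:ℝ) < (M:ℝ) := by exact_mod_cast (by omega : 0 < M)
  have hM1 : (1:ℝ) ≤ (M:ℝ) := by exact_mod_cast (by omega : 1 ≤ M)
  have hd0 : (0:ℝ) < (d:ℝ) := by exact_mod_cast (by omega : 0 < d)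
  have hd1 : (1:ℝ) ≤ (d:ℝ) := by exact_mod_cast hd
  set c : ℝ := 1 / ((M:ℝ) ^ (t+1) * (8 * (d:ℝ))) with hc_def
  set r : ℝ := 2 * (d:ℝ) / (M:ℝ) ^ j with hr_def
  have hMj : (0:ℝ) < (M:ℝ) ^ j := pow_pos hM0 _
  have hrpos : 0 < r := by rw [hr_def]; positivity
  have hcpos : 0 < c := by rw [hc_def]; positivity
  have hcr : c * r = 1 / (4 * (M:ℝ) ^ (j + t + 1)) := by
    rw [hc_def, hr_def]
    have h1 : (M:ℝ) ^ (j + t + 1) = (M:ℝ) ^ (t + 1) * (M:ℝ) ^ j := by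
      rw [← pow_add]; congr 1; omega
    field_simp
    ring
  -- the child cube index
  set ch : Fin d → ℕ := fun i => K i * M + f i with hch_def
  set y : EuclideanSpace ℝ (Fin d) := ycenter d M ℓ K f with hy_def
  have hymem : y ∈ mCube d M (ℓ + 1) ch := ycenter_mem hM ℓ K f
  -- the child cube sits inside the level-j cube indexed by A
  have hdiv : (fun i => ch i / M ^ (ℓ + 1 - j)) = A := by
    funext i
    have hstep : M ^ (ℓ + 1 - j) = M * M ^ (ℓ - j) := by
      rw [← pow_succ']; congr 1; omega
    show (K i * M + f i) / M ^ (ℓ + 1 - j) = A i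
    rw [hstep, ← Nat.div_div_eq_div_mul, mul_comm (K i) M,
      Nat.mul_add_div (by omega), Nat.div_eq_of_lt (hf i), add_zero, hanc i]
  have hyA : y ∈ mCube d M j A := by
    have := mCube_subset (d := d) hM (by omega : j ≤ ℓ + 1) ch hymem
    rwa [hdiv] at this
  have hdistxy : dist y x ≤ (d:ℝ) / (M:ℝ) ^ j := dist_le_of_mem_mCube hd hM hyA hxA
  -- conclude
  apply le_csSup (porSet_bddAbove hd hrpos)
  refine ⟨hcpos.le, y, fun z hz => ?_⟩
  rw [mem_closedBall] at hz
  rw [hcr] at hz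
  have hMjt : (M:ℝ) ^ j ≤ (M:ℝ) ^ (j + t + 1) := pow_le_pow_right₀ hM1 (by omega)
  have hMℓ : (M:ℝ) ^ (ℓ + 1) ≤ (M:ℝ) ^ (j + t + 1) := pow_le_pow_right₀ hM1 (by omega)
  have hMℓ0 : (0:ℝ) < (M:ℝ) ^ (ℓ + 1) := pow_pos hM0 _
  have hMjt0 : (0:ℝ) < (M:ℝ) ^ (j + t + 1) := pow_pos hM0 _
  constructor
  · -- z ∈ closedBall x r
    rw [mem_closedBall]
    have h1 : dist z x ≤ dist z y + dist y x := dist_triangle z y x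
    have h2 : 1 / (4 * (M:ℝ) ^ (j + t + 1)) ≤ 1 / (4 * (M:ℝ) ^ j) := by gcongr
    have h3 : 1 / (4 * (M:ℝ) ^ j) ≤ (d:ℝ) / (M:ℝ) ^ j := by
      rw [div_le_div_iff₀ (by positivity) hMj]
      nlinarith
    have : dist z x ≤ (d:ℝ) / (M:ℝ) ^ j + (d:ℝ) / (M:ℝ) ^ j := by linarith
    rw [hr_def]
    calc dist z x ≤ (d:ℝ) / (M:ℝ) ^ j + (d:ℝ) / (M:ℝ) ^ j := this
      _ = 2 * (d:ℝ) / (M:ℝ) ^ j := by ring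
  · -- z ∉ gwLimit
    intro hzE
    have hzlev : z ∈ gwLevel d M (ℓ + 1) sel := by
      rw [gwLimit] at hzE
      exact mem_iInter.mp hzE (ℓ + 1)
    have hzy : dist z y ≤ 1 / (4 * (M:ℝ) ^ (ℓ + 1)) := by
      have : 1 / (4 * (M:ℝ) ^ (j + t + 1)) ≤ 1 / (4 * (M:ℝ) ^ (ℓ + 1)) := by gcongr
      linarith
    exact notin_gwLevel hM sel hkept hf hfn (hy_def ▸ hzy) hzlev

/-- All possible offsets. -/
def allOff (d M : ℕ) : Finset (Fin d → ℕ) := Fintype.piFinset fun _ : Fin d => Finset.range M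

lemma card_allOff : (allOff d M).card = M ^ d := by
  simp [allOff, Fintype.card_piFinset]

lemma sel_subset_allOff {s : Finset (Fin d → ℕ)} (hs : ∀ f ∈ s, ∀ i, f i < M) :
    s ⊆ allOff d M := fun f hf =>
  Fintype.mem_piFinset.mpr fun i => Finset.mem_range.mpr (hs f hf i)

lemma full_eq {s : Finset (Fin d → ℕ)} (hs : ∀ f ∈ s, ∀ i, f i < M)
    (hcard : s.card = M ^ d) : s = allOff d M :=
  Finset.eq_of_subset_of_card_le (sel_subset_allOff hs) (by rw [card_allOff, hcard])

lemma exists_missing {s : Finset (Fin d → ℕ)} (hs : ∀ f ∈ s, ∀ i, f i < M)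
    (hne : s.card ≠ M ^ d) : ∃ f, (∀ i, f i < M) ∧ f ∉ s := by
  have hss : s ⊂ allOff d M := by
    refine (sel_subset_allOff hs).ssubset_of_ne (fun heq => hne ?_)
    rw [heq, card_allOff]
  obtain ⟨f, hf1, hf2⟩ := Finset.exists_of_ssubset hss
  exact ⟨f, fun i => Finset.mem_range.mp (Fintype.mem_piFinset.mp hf1 i), hf2⟩

lemma desc_bound {a b ℓ t : ℕ} (ha : a < M ^ ℓ) (hb : b < M ^ t) :
    a * M ^ t + b < M ^ (ℓ + t) := by
  calc a * M ^ t + b < a * M ^ t + M ^ t := by omega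
    _ = (a + 1) * M ^ t := by ring
    _ ≤ M ^ ℓ * M ^ t := Nat.mul_le_mul_right _ (by omega)
    _ = M ^ (ℓ + t) := (pow_add M ℓ t).symm

lemma desc_div {a b t : ℕ} (hM : 2 ≤ M) (hb : b < M ^ t) : (a * M ^ t + b) / M ^ t = a := by
  rw [mul_comm, Nat.mul_add_div (Nat.pow_pos (by omega)), Nat.div_eq_of_lt hb, add_zero]

lemma kept_tube (hM : 2 ≤ M) (sel : ℕ × (Fin d → ℕ) → Finset (Fin d → ℕ))
    (hsel : ∀ p, ∀ f ∈ sel p, ∀ i, f i < M) (t ℓ : ℕ) (A : Fin d → ℕ)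
    (hA : ∀ i, A i < M ^ ℓ) (hk : keptGW M d sel ℓ A) :
    (∀ s ≤ t, ∀ K : Fin d → ℕ, (∀ i, K i < M ^ (ℓ + s)) → keptGW M d sel (ℓ + s) K →
        (∀ i, K i / M ^ s = A i) → (sel (ℓ + s, K)).card = M ^ d) →
    ∀ g : Fin d → ℕ, (∀ i, g i < M ^ t) →
      keptGW M d sel (ℓ + t) (fun i => A i * M ^ t + g i) := by
  have hM0 : 0 < M := by omega
  induction t with
  | zero =>
    intro _ g hg
    have heq : (fun i => A i * M ^ 0 + g i) = A := by
      funext i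
      have := hg i
      simp only [pow_zero] at this ⊢
      omega
    rw [heq]
    exact hk
  | succ t ih =>
    intro H g hg
    have hgdiv : ∀ i, g i / M < M ^ t := by
      intro i
      rw [Nat.div_lt_iff_lt_mul hM0]
      calc g i < M ^ (t + 1) := hg i
        _ = M ^ t * M := pow_succ M t
    have hpk : keptGW M d sel (ℓ + t) (fun i => A i * M ^ t + g i / M) :=
      ih (fun s hs K hb hk' hdiv => H s (hs.trans (Nat.le_succ t)) K hb hk' hdiv)
        (fun i => g i / M) hgdiv
    have hpb : ∀ i, A i * M ^ t + g i / M < M ^ (ℓ + t) := fun i =>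
      desc_bound (hA i) (hgdiv i)
    have hpdiv : ∀ i, (A i * M ^ t + g i / M) / M ^ t = A i := fun i =>
      desc_div hM (hgdiv i)
    have hfull := H t (Nat.le_succ t) _ hpb hpk hpdiv
    have hself : sel (ℓ + t, fun i => A i * M ^ t + g i / M) = allOff d M :=
      full_eq (hsel _) hfull
    have hdivM : (fun i => (A i * M ^ (t + 1) + g i) / M) =
        (fun i => A i * M ^ t + g i / M) := by
      funext i
      rw [pow_succ, show A i * (M ^ t * M) + g i = M * (A i * M ^ t) + g i by ring,
        Nat.mul_add_div hM0]
    have hmodM : (fun i => (A i * M ^ (t + 1) + g i) % M) = (fun i => g i % M) := by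
      funext i
      rw [pow_succ, show A i * (M ^ t * M) + g i = M * (A i * M ^ t) + g i by ring,
        Nat.mul_add_mod]
    refine ⟨?_, ?_⟩
    · rw [hdivM]; exact hpk
    · show (fun i => (A i * M ^ (t + 1) + g i) % M) ∈
        sel (ℓ + t, fun i => (A i * M ^ (t + 1) + g i) / M)
      rw [hdivM, hmodM, hself]
      exact Fintype.mem_piFinset.mpr fun i => Finset.mem_range.mpr (Nat.mod_lt _ hM0)

lemma reduction (hd : 1 ≤ d) (hM : 2 ≤ M) (sel : ℕ × (Fin d → ℕ) → Finset (Fin d → ℕ))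
    (hsel : ∀ p, ∀ f ∈ sel p, ∀ i, f i < M) (t : ℕ)
    {x : EuclideanSpace ℝ (Fin d)} (hx : x ∈ gwLimit d M sel)
    (hu : upor (gwLimit d M sel) x < 1 / ((M:ℝ) ^ (t+1) * (8 * (d:ℝ)))) :
    ∃ a : ℕ, ∀ n : ℕ, ∃ k : Fin d → ℕ, (∀ i, k i < M ^ (a + n)) ∧
      ∀ j, a ≤ j → j ≤ a + n → ∀ g : Fin d → ℕ, (∀ i, g i < M ^ t) →
        (sel (j + t, fun i => (k i / M ^ (a + n - j)) * M ^ t + g i)).card = M ^ d := by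
  set c : ℝ := 1 / ((M:ℝ) ^ (t+1) * (8 * (d:ℝ))) with hc_def
  have hnot : ∃ a : ℕ, ∀ j, a ≤ j → por (gwLimit d M sel) x (2 * (d:ℝ) / (M:ℝ) ^ j) < c := by
    by_contra hcon
    push_neg at hcon
    have : c ≤ upor (gwLimit d M sel) x :=
      le_upor_of_frequently hd hM (fun a => by
        obtain ⟨j, hj1, hj2⟩ := hcon a
        exact ⟨j, hj1, hj2⟩)
    exact absurd this (not_le.mpr hu)
  obtain ⟨a, ha⟩ := hnot
  refine ⟨a, fun n => ?_⟩
  have hxl : x ∈ gwLevel d M (a + n) sel := by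
    rw [gwLimit] at hx
    exact mem_iInter.mp hx (a + n)
  rw [gwLevel] at hxl
  simp only [mem_iUnion] at hxl
  obtain ⟨k, ⟨hkb, hkk⟩, hxc⟩ := hxl
  refine ⟨k, hkb, fun j hja hjn g hg => ?_⟩
  have hxE : x ∈ gwLimit d M sel := hx
  set A : Fin d → ℕ := fun i => k i / M ^ (a + n - j) with hA_def
  have hAb : ∀ i, A i < M ^ j := fun i => nat_div_pow_lt hM (hkb i) hjn
  have hAk : keptGW M d sel j A := kept_div sel k hkk j hjn
  have hxA : x ∈ mCube d M j A := mCube_subset hM hjn k hxc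
  have H : ∀ s ≤ t, ∀ K : Fin d → ℕ, (∀ i, K i < M ^ (j + s)) → keptGW M d sel (j + s) K →
      (∀ i, K i / M ^ s = A i) → (sel (j + s, K)).card = M ^ d := by
    intro s hs K hKb hKk hKdiv
    by_contra hne
    obtain ⟨f, hf, hfn⟩ := exists_missing (hsel _) hne
    have hanc : ∀ i, K i / M ^ (j + s - j) = A i := by
      intro i
      rw [show j + s - j = s by omega]
      exact hKdiv i
    have hpor := le_por (t := t) hd hM sel hxE (Nat.le_add_right j s)
      (by omega : j + s ≤ j + t) hxA hKk hanc hf hfn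
    rw [← hc_def] at hpor
    exact absurd hpor (not_le.mpr (ha j hja))
  have hkept := kept_tube hM sel hsel t j A hAb hAk H g hg
  have hb : ∀ i, A i * M ^ t + g i < M ^ (j + t) := fun i => desc_bound (hAb i) (hg i)
  have hdv : ∀ i, (A i * M ^ t + g i) / M ^ t = A i := fun i => desc_div hM (hg i)
  exact H t le_rfl _ hb hkept hdv

lemma pow_le_pow_anti {q : ℝ≥0∞} (hq : q ≤ 1) {n m : ℕ} (h : n ≤ m) : q ^ m ≤ q ^ n := by
  calc q ^ m = q ^ n * q ^ (m - n) := by rw [← pow_add]; congr 1; omega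
    _ ≤ q ^ n * 1 := by gcongr; exact pow_le_one' hq _
    _ = q ^ n := mul_one _

/-- The finite family of cube-indices whose selections are required to be full. -/
def Wfin (d M N a n : ℕ) (k : Fin d → ℕ) : Finset (ℕ × (Fin d → ℕ)) :=
  ((Finset.Icc a n) ×ˢ (Fintype.piFinset fun _ : Fin d => Finset.range (M ^ N))).image
    (fun jg => (jg.1 + N, fun i => (k i / M ^ (n - jg.1)) * M ^ N + jg.2 i))

lemma Wfin_card (d M N a n : ℕ) (k : Fin d → ℕ) (han : a ≤ n) :
    (Wfin d M N a n k).card = (n - a + 1) * ((M ^ N) ^ d) := by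
  rw [Wfin, Finset.card_image_of_injective, Finset.card_product, Nat.card_Icc,
    Fintype.card_piFinset]
  · simp only [Finset.card_range, Finset.prod_const, Finset.card_univ, Fintype.card_fin]
    congr 1
    omega
  · rintro ⟨j, g⟩ ⟨j', g'⟩ h
    simp only [Prod.mk.injEq] at h
    obtain ⟨h1, h2⟩ := h
    have hj : j = j' := by omega
    subst hj
    refine Prod.ext rfl ?_
    funext i
    show g i = g' i
    have h3 : (k i / M ^ (n - j)) * M ^ N + g i =
        (k i / M ^ (n - j)) * M ^ N + g' i := congrFun h2 i
    omega

end Stmt15Aux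

open Stmt15Aux

/-- In the general Galton–Watson random set framework, there is
`c > 0` such that a.s. `upor(E,x) ≥ c` for every `x ∈ E`. -/
theorem stmt15 {Ω : Type} [MeasurableSpace Ω] (d M : ℕ) (hd : 1 ≤ d) (hM : 2 ≤ M)
    (P : Measure Ω) [IsProbabilityMeasure P]
    (select : ℕ × (Fin d → ℕ) → Ω → Finset (Fin d → ℕ))
    (hsel : ∀ q ω, ∀ f ∈ select q ω, ∀ i, f i < M)
    (hmeas : ∀ q, Measurable fun ω => (select q ω).card)
    (hindep : iIndepFun (fun q ω => (select q ω).card) P)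
    (ν : Measure ℕ) [IsProbabilityMeasure ν]
    (hlaw : ∀ q, Measure.map (fun ω => (select q ω).card) P = ν)
    (hL1 : ν {1} < 1) (hLtop : ν {M ^ d} < 1) :
    ∃ c : ℝ, 0 < c ∧
      ∀ᵐ ω ∂P, ∀ x ∈ gwLimit d M (fun q => select q ω), c ≤ upor (gwLimit d M (fun q => select q ω)) x := by
  classical
  set q : ℝ≥0∞ := ν {M ^ d} with hq_def
  have hq1 : q < 1 := hLtop
  have hqle1 : q ≤ 1 := hq1.le
  have hMd_ne_top : ((M:ℝ≥0∞) ^ d) ≠ ∞ := ENNReal.pow_ne_top (ENNReal.natCast_ne_top M)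
  -- choose N with M^d * q^N < 1/2
  obtain ⟨N, hN⟩ : ∃ N : ℕ, ((M:ℝ≥0∞) ^ d) * q ^ N < 2⁻¹ := by
    have h0 : Filter.Tendsto (fun N : ℕ => ((M:ℝ≥0∞) ^ d) * q ^ N) Filter.atTop (nhds 0) := by
      have := ENNReal.Tendsto.const_mul
        (ENNReal.tendsto_pow_atTop_nhds_zero_of_lt_one hq1) (Or.inr hMd_ne_top)
      simpa using this
    have := h0.eventually_lt_const (show (0:ℝ≥0∞) < 2⁻¹ by norm_num)
    exact this.exists
  set c : ℝ := 1 / ((M:ℝ) ^ (N + 1) * (8 * (d:ℝ))) with hc_def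
  have hM0 : (0:ℝ) < (M:ℝ) := by exact_mod_cast (by omega : 0 < M)
  have hd0 : (0:ℝ) < (d:ℝ) := by exact_mod_cast (by omega : 0 < d)
  have hc : 0 < c := by rw [hc_def]; positivity
  refine ⟨c, hc, ?_⟩
  -- probability of a full-selection event
  have hFP : ∀ p : ℕ × (Fin d → ℕ),
      P ((fun ω => (select p ω).card) ⁻¹' {M ^ d}) = q := by
    intro p
    rw [← Measure.map_apply (hmeas p) (measurableSet_singleton _), hlaw p]
  -- the tube events
  have hTP : ∀ a n (k : Fin d → ℕ), a ≤ n →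
      P (⋂ p ∈ Wfin d M N a n k, (fun ω => (select p ω).card) ⁻¹' {M ^ d}) =
        q ^ ((n - a + 1) * ((M ^ N) ^ d)) := by
    intro a n k han
    have hprod := iIndepFun_iff_measure_inter_preimage_eq_mul.mp hindep
      (Wfin d M N a n k) (sets := fun _ => ({M ^ d} : Set ℕ))
      (fun p _ => measurableSet_singleton _)
    rw [hprod, Finset.prod_congr rfl (fun p _ => hFP p), Finset.prod_const,
      Wfin_card d M N a n k han]
  -- the bad events
  set S : ℕ → ℕ → Set Ω := fun a n =>
    ⋃ k ∈ Fintype.piFinset (fun _ : Fin d => Finset.range (M ^ n)),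
      ⋂ p ∈ Wfin d M N a n k, (fun ω => (select p ω).card) ⁻¹' {M ^ d} with hS_def
  have hSP : ∀ a n', P (S a (a + n')) ≤ ((M:ℝ≥0∞) ^ d) ^ a * (2⁻¹ : ℝ≥0∞) ^ n' := by
    intro a n'
    have hNle : N ≤ (M ^ N) ^ d := by
      calc N ≤ 2 ^ N := (Nat.lt_two_pow_self).le
        _ ≤ M ^ N := Nat.pow_le_pow_left (by omega) N
        _ ≤ (M ^ N) ^ d := Nat.le_self_pow (by omega) _
    have hexp : n' * N ≤ (a + n' - a + 1) * ((M ^ N) ^ d) := by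
      have h1 : n' * N ≤ n' * ((M ^ N) ^ d) := Nat.mul_le_mul_left n' hNle
      have h2 : n' * ((M ^ N) ^ d) ≤ (n' + 1) * ((M ^ N) ^ d) :=
        Nat.mul_le_mul_right _ (by omega)
      have h3 : a + n' - a + 1 = n' + 1 := by omega
      rw [h3]
      exact h1.trans h2
    calc P (S a (a + n'))
        ≤ ∑ k ∈ Fintype.piFinset (fun _ : Fin d => Finset.range (M ^ (a + n'))),
            P (⋂ p ∈ Wfin d M N a (a + n') k, (fun ω => (select p ω).card) ⁻¹' {M ^ d}) := by
          rw [hS_def]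
          exact measure_biUnion_finset_le _ _
      _ = ∑ _k ∈ Fintype.piFinset (fun _ : Fin d => Finset.range (M ^ (a + n'))),
            q ^ ((a + n' - a + 1) * ((M ^ N) ^ d)) :=
          Finset.sum_congr rfl (fun k _ => hTP a (a + n') k (by omega))
      _ = (((M ^ (a + n')) ^ d : ℕ) : ℝ≥0∞) * q ^ ((a + n' - a + 1) * ((M ^ N) ^ d)) := by
          rw [Finset.sum_const, nsmul_eq_mul, Fintype.card_piFinset]
          simp only [Finset.card_range, Finset.prod_const, Finset.card_univ, Fintype.card_fin]
      _ ≤ (((M ^ (a + n')) ^ d : ℕ) : ℝ≥0∞) * (q ^ N) ^ n' := by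
          refine mul_le_mul_right ?_ _
          rw [← pow_mul q N n']
          exact pow_le_pow_anti hqle1 (by rw [Nat.mul_comm N n']; exact hexp)
      _ = ((M:ℝ≥0∞) ^ d) ^ a * (((M:ℝ≥0∞) ^ d) ^ n' * (q ^ N) ^ n') := by
          have hcast : (((M ^ (a + n')) ^ d : ℕ) : ℝ≥0∞) =
              ((M:ℝ≥0∞) ^ d) ^ a * ((M:ℝ≥0∞) ^ d) ^ n' := by
            push_cast
            ring
          rw [hcast, mul_assoc]
      _ = ((M:ℝ≥0∞) ^ d) ^ a * ((((M:ℝ≥0∞) ^ d) * q ^ N) ^ n') := by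
          rw [mul_pow]
      _ ≤ ((M:ℝ≥0∞) ^ d) ^ a * (2⁻¹ : ℝ≥0∞) ^ n' :=
          mul_le_mul_right (pow_le_pow_left' hN.le n') _
  -- each ⋂-event is null
  have hΛ : ∀ a, P (⋂ n', S a (a + n')) = 0 := by
    intro a
    have hle : ∀ n', P (⋂ n', S a (a + n')) ≤ ((M:ℝ≥0∞) ^ d) ^ a * (2⁻¹ : ℝ≥0∞) ^ n' :=
      fun n' => (measure_mono (iInter_subset _ n')).trans (hSP a n')
    have htend : Filter.Tendsto (fun n' : ℕ => ((M:ℝ≥0∞) ^ d) ^ a * (2⁻¹ : ℝ≥0∞) ^ n')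
        Filter.atTop (nhds 0) := by
      have h2 := ENNReal.Tendsto.const_mul (a := ((M:ℝ≥0∞) ^ d) ^ a)
        (ENNReal.tendsto_pow_atTop_nhds_zero_of_lt_one
          (show (2⁻¹ : ℝ≥0∞) < 1 by norm_num))
        (Or.inr (ENNReal.pow_ne_top hMd_ne_top))
      simpa using h2
    have := ge_of_tendsto' htend hle
    exact le_antisymm this zero_le
  -- conclude
  rw [ae_iff]
  refine measure_mono_null ?_ (measure_iUnion_null (fun a => hΛ a))
  intro ω hω
  simp only [mem_setOf_eq, not_forall] at hω
  obtain ⟨x, hxE, hxu⟩ := hω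
  obtain ⟨a, hared⟩ := reduction hd hM (fun p => select p ω) (fun p => hsel p ω) N hxE
    (by rw [← hc_def]; exact not_le.mp hxu)
  refine mem_iUnion.mpr ⟨a, mem_iInter.mpr fun n => ?_⟩
  obtain ⟨k, hkb, hk⟩ := hared n
  refine mem_iUnion₂.mpr ⟨k, Fintype.mem_piFinset.mpr
    (fun i => Finset.mem_range.mpr (hkb i)), ?_⟩
  refine mem_iInter₂.mpr fun p hp => ?_
  simp only [Wfin, Finset.mem_image, Finset.mem_product, Finset.mem_Icc] at hp
  obtain ⟨⟨j, g⟩, ⟨⟨hja, hjn⟩, hgmem⟩, rfl⟩ := hp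
  have hgb : ∀ i, g i < M ^ N := fun i =>
    Finset.mem_range.mp (Fintype.mem_piFinset.mp hgmem i)
  exact hk j hja hjn g hgb
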